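/- Let (𝐬, r(𝐬)) ∈ 𝒮 be connected with r(𝐬) = (1, r_1, r_2) (so k = 2, r = r_2, r_0 = 1), and let ε ∈ {0,1}. If i_{r_1−1+2ε} < i_{r_1+1−2ε}, then there exists p_1 with r_ε + ε ≤ p_1 < r_{1+ε} + ε such that i_{p_1} ≤ i_s < j_s ≤ j_{p_1} for all s with r_{1−ε} − ε < s ≤ r_{2−ε} − ε, and, whenever the index p_1 − 1 + 2ε lies in {1, …, r_2}, the following hold: if 𝐬(0,r_1) ∈ S_→ then j_{p_1−1+2ε} < i_{r_{2−2ε}}, and if 𝐬(0,r_1) ∈ S_← then j_{r_{2−2ε}} < i_{p_1−1+2ε} (here r_{2−2ε} means r_2 when ε = 0 and r_0 = 1 when ε = 1). -/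
import Mathlib


namespace AltSnakePaper

/-- `[i,j] ∈ 𝕀ₙ`: the interval condition `0 ≤ j - i ≤ n + 1`. -/
def InIn (n : ℕ) (i j : ℤ) : Prop := 0 ≤ j - i ∧ j - i ≤ (n : ℤ) + 1

/-- The intervals `[i1,j1]` and `[i2,j2]` overlap. -/
def Overlap (i1 j1 i2 j2 : ℤ) : Prop :=
  (i1 < i2 ∧ i2 ≤ j1 ∧ j1 < j2) ∨ (i2 < i1 ∧ i1 ≤ j2 ∧ j2 < j1)

/-- The pair `([i1,j1],[i2,j2])` is connected. -/
def ConnPair (n : ℕ) (i1 j1 i2 j2 : ℤ) : Prop :=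
  Overlap i1 j1 i2 j2 ∧ InIn n i1 j2 ∧ InIn n i2 j1

/-- The subtuple `𝐬(a,b)` (entries with indices `a+1, …, b`) lies in `S_→`. -/
def SRight (ii jj : ℕ → ℤ) (a b : ℕ) : Prop :=
  ∀ s, a + 1 ≤ s → s + 1 ≤ b → ii s < ii (s + 1) ∧ jj s < jj (s + 1)

/-- The subtuple `𝐬(a,b)` (entries with indices `a+1, …, b`) lies in `S_←`. -/
def SLeft (ii jj : ℕ → ℤ) (a b : ℕ) : Prop :=
  ∀ s, a + 1 ≤ s → s + 1 ≤ b → ii (s + 1) < ii s ∧ jj (s + 1) < jj s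

/-- `(𝐬, r(𝐬))` is an alternating snake, where `𝐬 = ([i_1,j_1],…,[i_r,j_r])`
(encoded by `ii jj : ℕ → ℤ`, entries indexed `1,…,r`) and
`r(𝐬) = (r_0, r_1, …, r_k)` (encoded by `rr : ℕ → ℕ`). -/
structure IsAltSnake (n r k : ℕ) (rr : ℕ → ℕ) (ii jj : ℕ → ℤ) : Prop where
  hr : 1 ≤ r
  hk : k ≤ r
  mem : ∀ s, 1 ≤ s → s ≤ r → InIn n (ii s) (jj s)
  distinct : ∀ s p, 1 ≤ s → s ≤ r → 1 ≤ p → p ≤ r → s ≠ p → ii s ≠ ii p ∨ jj s ≠ jj p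
  rr0 : rr 0 = 1
  rrk : rr k = r
  rrmono : ∀ m, m < k → rr m < rr (m + 1)
  mono : ∀ m, 1 ≤ m → m ≤ k →
      SRight ii jj (rr (m - 1) - 1) (rr m) ∨ SLeft ii jj (rr (m - 1) - 1) (rr m)
  alt : ∀ m, 1 ≤ m → m < k →
      (SRight ii jj (rr (m - 1) - 1) (rr m) ↔ SLeft ii jj (rr m - 1) (rr (m + 1)))
  nonoverlap : ∀ m s t, 1 ≤ m → m < k → 1 ≤ s → s < rr m → rr m < t → t ≤ r →
      ¬ Overlap (ii s) (jj s) (ii t) (jj t)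

/-- The subtuple `𝐬(a,b)` is connected: all consecutive pairs are connected. -/
def SegConnected (n : ℕ) (ii jj : ℕ → ℤ) (a b : ℕ) : Prop :=
  ∀ s, a + 1 ≤ s → s + 1 ≤ b → ConnPair n (ii s) (jj s) (ii (s + 1)) (jj (s + 1))

/-- The subtuple `𝐬(a,b)` (with its induced r-vector, whose internal break points
are the `rr m` with `a + 1 < rr m < b`) is prime. -/
def SegPrime (n k : ℕ) (rr : ℕ → ℕ) (ii jj : ℕ → ℤ) (a b : ℕ) : Prop :=
  SegConnected n ii jj a b ∧
    ∀ m, 1 ≤ m → m < k → a + 1 < rr m → rr m < b →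
      ii (rr m - 1) ≠ ii (rr m + 1) ∧ jj (rr m - 1) ≠ jj (rr m + 1)

/-- The subtuple `𝐬(a,b)` (with its induced r-vector) is stable. -/
def SegStable (k : ℕ) (rr : ℕ → ℕ) (ii jj : ℕ → ℤ) (a b : ℕ) : Prop :=
  ∀ m, 1 ≤ m → m < k → a + 1 < rr m → rr m < b →
    (ii (rr m + 1) < ii (rr m - 1) → jj (rr m + 1) < ii (rr m - 1)) ∧
    (jj (rr m - 1) < jj (rr m + 1) → jj (rr m - 1) < ii (rr m + 1))

/-- The alternating snake is stable. -/
def Stable (k : ℕ) (rr : ℕ → ℕ) (ii jj : ℕ → ℤ) : Prop :=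
  ∀ m, 1 ≤ m → m < k →
    (ii (rr m + 1) < ii (rr m - 1) → jj (rr m + 1) < ii (rr m - 1)) ∧
    (jj (rr m - 1) < jj (rr m + 1) → jj (rr m - 1) < ii (rr m + 1))

/-- The boundary condition allowing a cut of the snake at `p = rr m - ε`:
`a_{r_m-1} = a_{r_m+1}` for some `a ∈ {i, j}`, with `ε ∈ {0,1}` chosen so that, `b`
denoting the other member of `{i,j}`, one has `b_{r_m−1+2ε} < b_{r_m+1−2ε}` if
`𝐬(r_m−2, r_m) ∈ S_←` and `b_{r_m+1−2ε} < b_{r_m−1+2ε}` if `𝐬(r_m−2, r_m) ∈ S_→`. -/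
def BoundaryCond (k : ℕ) (rr : ℕ → ℕ) (ii jj : ℕ → ℤ) (m ε : ℕ) : Prop :=
  (ii (rr m - 1) = ii (rr m + 1) ∧
    (SLeft ii jj (rr m - 2) (rr m) → jj (rr m - 1 + 2 * ε) < jj (rr m + 1 - 2 * ε)) ∧
    (SRight ii jj (rr m - 2) (rr m) → jj (rr m + 1 - 2 * ε) < jj (rr m - 1 + 2 * ε))) ∨
  (jj (rr m - 1) = jj (rr m + 1) ∧
    (SLeft ii jj (rr m - 2) (rr m) → ii (rr m - 1 + 2 * ε) < ii (rr m + 1 - 2 * ε)) ∧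
    (SRight ii jj (rr m - 2) (rr m) → ii (rr m + 1 - 2 * ε) < ii (rr m - 1 + 2 * ε)))

/-- `p` is an admissible cut point for the prime decomposition. -/
def CutAt (n r k : ℕ) (rr : ℕ → ℕ) (ii jj : ℕ → ℤ) (p : ℕ) : Prop :=
  p = r ∨
  ¬ ConnPair n (ii p) (jj p) (ii (p + 1)) (jj (p + 1)) ∨
  ∃ m ε, 1 ≤ m ∧ m < k ∧ ε ≤ 1 ∧ p = rr m - ε ∧ BoundaryCond k rr ii jj m ε

/-- `0 = c 0 < c 1 < ⋯ < c L = r` are the cut points of a prime decomposition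
of the snake, the prime factors being the segments `𝐬(c t, c (t+1))`. -/
def IsPrimeDecomp (n r k : ℕ) (rr : ℕ → ℕ) (ii jj : ℕ → ℤ) (c : ℕ → ℕ) (L : ℕ) : Prop :=
  1 ≤ L ∧ c 0 = 0 ∧ c L = r ∧ (∀ t, t < L → c t < c (t + 1)) ∧
  (∀ t, t < L → SegPrime n k rr ii jj (c t) (c (t + 1))) ∧
  (∀ t, 1 ≤ t → t ≤ L → CutAt n r k rr ii jj (c t))

/-- The segment `𝐬(a,b)` is contained in a prime factor of `𝐬`. -/
def ContainedInPF (n r k : ℕ) (rr : ℕ → ℕ) (ii jj : ℕ → ℤ) (a b : ℕ) : Prop :=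
  ∃ c L t, IsPrimeDecomp n r k rr ii jj c L ∧ t < L ∧ c t ≤ a ∧ b ≤ c (t + 1)


private lemma step_mono (f : ℕ → ℤ) (a b : ℕ)
    (h : ∀ s, a ≤ s → s + 1 ≤ b → f s < f (s + 1)) :
    ∀ q, q ≤ b → ∀ p, a ≤ p → p < q → f p < f q := by
  intro q
  induction q with
  | zero => intro _ p _ hp; omega
  | succ m ih =>
    intro hq p hp hpq
    rcases Nat.lt_or_ge p m with h' | h'
    · exact lt_trans (ih (by omega) p hp h') (h m (by omega) hq)
    · have hpm : p = m := by omega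
      subst hpm
      exact h p hp hq

private lemma step_mono_le (f : ℕ → ℤ) (a b : ℕ)
    (h : ∀ s, a ≤ s → s + 1 ≤ b → f s < f (s + 1)) :
    ∀ q, q ≤ b → ∀ p, a ≤ p → p ≤ q → f p ≤ f q := by
  intro q hq p hp hpq
  rcases eq_or_lt_of_le hpq with rfl | h'
  · exact le_refl _
  · exact (step_mono f a b h q hq p hp h').le

private lemma step_anti (f : ℕ → ℤ) (a b : ℕ)
    (h : ∀ s, a ≤ s → s + 1 ≤ b → f (s + 1) < f s) :
    ∀ q, q ≤ b → ∀ p, a ≤ p → p < q → f q < f p := by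
  intro q hq p hp hpq
  have := step_mono (fun s => -f s) a b (fun s hs hs' => by simpa using h s hs hs') q hq p hp hpq
  simpa using this

private lemma step_anti_le (f : ℕ → ℤ) (a b : ℕ)
    (h : ∀ s, a ≤ s → s + 1 ≤ b → f (s + 1) < f s) :
    ∀ q, q ≤ b → ∀ p, a ≤ p → p ≤ q → f q ≤ f p := by
  intro q hq p hp hpq
  rcases eq_or_lt_of_le hpq with rfl | h'
  · exact le_refl _
  · exact (step_anti f a b h q hq p hp h').le

private lemma up_ind (P : ℕ → Prop) (a r : ℕ) (base : P a)
    (step : ∀ t, a ≤ t → t + 1 ≤ r → P t → P (t + 1)) :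
    ∀ t, a ≤ t → t ≤ r → P t := by
  intro t hat htr
  induction t with
  | zero => exact (show a = 0 by omega) ▸ base
  | succ m ih =>
    rcases Nat.lt_or_ge a (m + 1) with h' | h'
    · exact step m (by omega) htr (ih (by omega) (by omega))
    · exact (show a = m + 1 by omega) ▸ base

private lemma down_ind (P : ℕ → Prop) (a : ℕ) (base : P a)
    (step : ∀ s, 1 ≤ s → s + 1 ≤ a → P (s + 1) → P s) :
    ∀ s, 1 ≤ s → s ≤ a → P s := by
  have key : ∀ d s, 1 ≤ s → s + d = a → P s := by
    intro d
    induction d with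
    | zero => intro s hs hsa; exact (show a = s by omega) ▸ base
    | succ m ih =>
      intro s hs hsa
      exact step s hs (by omega) (ih (s + 1) (by omega) (by omega))
  intro s hs hsa
  exact key (a - s) s hs (by omega)

private lemma ov_of_lt {i1 j1 i2 j2 : ℤ} (h : Overlap i1 j1 i2 j2) (hi : i1 < i2) :
    i2 ≤ j1 ∧ j1 < j2 := by
  rcases h with ⟨h1, h2, h3⟩ | ⟨h1, h2, h3⟩ <;> omega

private lemma ov_of_gt {i1 j1 i2 j2 : ℤ} (h : Overlap i1 j1 i2 j2) (hi : i2 < i1) :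
    i1 ≤ j2 ∧ j2 < j1 := by
  rcases h with ⟨h1, h2, h3⟩ | ⟨h1, h2, h3⟩ <;> omega

private lemma ov_lt_right {i1 j1 i2 j2 : ℤ} (h : Overlap i1 j1 i2 j2) :
    i1 < j1 ∧ i2 < j2 := by
  rcases h with ⟨h1, h2, h3⟩ | ⟨h1, h2, h3⟩ <;> omega

private lemma core_right (r a : ℕ) (I J : ℕ → ℤ) (ha2 : 2 ≤ a) (har : a < r)
    (inc : ∀ s, 1 ≤ s → s + 1 ≤ a → I s < I (s + 1) ∧ J s < J (s + 1))
    (dec : ∀ s, a ≤ s → s + 1 ≤ r → I (s + 1) < I s ∧ J (s + 1) < J s)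
    (ov : ∀ s, 1 ≤ s → s + 1 ≤ r → Overlap (I s) (J s) (I (s + 1)) (J (s + 1)))
    (non : ∀ s t, 1 ≤ s → s < a → a < t → t ≤ r → ¬ Overlap (I s) (J s) (I t) (J t))
    (hyp : I (a - 1) < I (a + 1)) :
    ∃ p, 1 ≤ p ∧ p < a ∧
      (∀ t, a < t → t ≤ r → I p ≤ I t ∧ I t < J t ∧ J t ≤ J p) ∧
      (2 ≤ p → ∀ t, a < t → t ≤ r → J (p - 1) < I t) := by
  classical
  have ea : a - 1 + 1 = a := by omega
  have hia : I (a - 1) < I a := by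
    have := (inc (a - 1) (by omega) (by omega)).1; rwa [ea] at this
  have o1 := ov (a - 1) (by omega) (by omega)
  rw [ea] at o1
  obtain ⟨o11, o12⟩ := ov_of_lt o1 hia
  obtain ⟨d11, d12⟩ := dec a (le_refl a) (by omega)
  obtain ⟨o21, o22⟩ := ov_of_gt (ov a (by omega) (by omega)) d11
  have base : J (a + 1) ≤ J (a - 1) := by
    by_contra hb; push_neg at hb
    exact non (a - 1) (a + 1) (by omega) (by omega) (by omega) (by omega)
      (Or.inl ⟨hyp, by omega, hb⟩)
  have claim1 : ∀ t, a + 1 ≤ t → t ≤ r → I (a - 1) ≤ I t ∧ J t ≤ J (a - 1) := by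
    refine up_ind (fun t => I (a - 1) ≤ I t ∧ J t ≤ J (a - 1)) (a + 1) r ⟨hyp.le, base⟩ ?_
    rintro t hat htr ⟨ih1, ih2⟩
    obtain ⟨dt1, dt2⟩ := dec t (by omega) htr
    obtain ⟨ot1, ot2⟩ := ov_of_gt (ov t (by omega) htr) dt1
    constructor
    · by_contra hb; push_neg at hb
      exact non (a - 1) (t + 1) (by omega) (by omega) (by omega) (by omega)
        (Or.inr ⟨hb, by omega, by omega⟩)
    · omega
  have hex : ∃ p, 1 ≤ p ∧ p ≤ a - 1 ∧ J (a + 1) ≤ J p := ⟨a - 1, by omega, le_refl _, base⟩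
  obtain ⟨hp1, hpa, hpJ⟩ := Nat.find_spec hex
  set p := Nat.find hex with hp
  have hcont : ∀ t, a < t → t ≤ r → I p ≤ I t ∧ I t < J t ∧ J t ≤ J p := by
    intro t hat htr
    have h1 : I p ≤ I (a - 1) :=
      step_mono_le I 1 a (fun s hs hs' => (inc s hs hs').1) (a - 1) (by omega) p hp1 hpa
    have h2 : I (a - 1) ≤ I t := (claim1 t (by omega) htr).1
    have h3 : J t ≤ J (a + 1) :=
      step_anti_le J a r (fun s hs hs' => (dec s hs hs').2) t htr (a + 1) (by omega) (by omega)
    have h4 : I t < J t := by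
      have o := ov (t - 1) (by omega) (by omega)
      rw [show t - 1 + 1 = t by omega] at o
      exact (ov_lt_right o).2
    exact ⟨h1.trans h2, h4, h3.trans hpJ⟩
  refine ⟨p, hp1, by omega, hcont, ?_⟩
  intro hp2
  have hnot := Nat.find_min hex (show p - 1 < p by omega)
  have hJp : J (p - 1) < J (a + 1) := by
    by_contra hb; push_neg at hb
    exact hnot ⟨by omega, by omega, hb⟩
  have hIp : I (p - 1) < I p := by
    have := (inc (p - 1) (by omega) (by omega)).1
    rwa [show p - 1 + 1 = p by omega] at this
  have hIpa : I (p - 1) < I (a + 1) := by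
    have := step_mono I 1 a (fun s hs hs' => (inc s hs hs').1) (a - 1) (by omega)
      (p - 1) (by omega) (by omega)
    omega
  have bnd_base : J (p - 1) < I (a + 1) := by
    by_contra hb; push_neg at hb
    exact non (p - 1) (a + 1) (by omega) (by omega) (by omega) (by omega)
      (Or.inl ⟨hIpa, hb, hJp⟩)
  have key : ∀ t, a + 1 ≤ t → t ≤ r → J (p - 1) < I t := by
    refine up_ind (fun t => J (p - 1) < I t) (a + 1) r bnd_base ?_
    intro t hat htr ih
    by_contra hb; push_neg at hb
    obtain ⟨dt1, dt2⟩ := dec t (by omega) htr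
    obtain ⟨ot1, ot2⟩ := ov_of_gt (ov t (by omega) htr) dt1
    by_cases hc2 : I (p - 1) < I (t + 1)
    · exact non (p - 1) (t + 1) (by omega) (by omega) (by omega) (by omega)
        (Or.inl ⟨hc2, hb, by omega⟩)
    · push_neg at hc2
      have h1 := (hcont (t + 1) (by omega) (by omega)).1
      omega
  intro t hat htr; exact key t (by omega) htr

private lemma core_left (r a : ℕ) (I J : ℕ → ℤ) (ha2 : 2 ≤ a) (har : a < r)
    (dec : ∀ s, 1 ≤ s → s + 1 ≤ a → I (s + 1) < I s ∧ J (s + 1) < J s)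
    (inc : ∀ s, a ≤ s → s + 1 ≤ r → I s < I (s + 1) ∧ J s < J (s + 1))
    (ov : ∀ s, 1 ≤ s → s + 1 ≤ r → Overlap (I s) (J s) (I (s + 1)) (J (s + 1)))
    (non : ∀ s t, 1 ≤ s → s < a → a < t → t ≤ r → ¬ Overlap (I s) (J s) (I t) (J t))
    (hyp : I (a - 1) < I (a + 1)) :
    ∃ p, 1 ≤ p ∧ p < a ∧
      (∀ t, a < t → t ≤ r → I p ≤ I t ∧ I t < J t ∧ J t ≤ J p) ∧
      (2 ≤ p → ∀ t, a < t → t ≤ r → J t < I (p - 1)) := by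
  classical
  have ea : a - 1 + 1 = a := by omega
  have hda : I a < I (a - 1) := by
    have := (dec (a - 1) (by omega) (by omega)).1; rwa [ea] at this
  have o1 := ov (a - 1) (by omega) (by omega)
  rw [ea] at o1
  obtain ⟨o11, o12⟩ := ov_of_gt o1 hda
  obtain ⟨i11, i12⟩ := inc a (le_refl a) (by omega)
  obtain ⟨o21, o22⟩ := ov_of_lt (ov a (by omega) (by omega)) i11
  have base : J (a + 1) ≤ J (a - 1) := by
    by_contra hb; push_neg at hb
    exact non (a - 1) (a + 1) (by omega) (by omega) (by omega) (by omega)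
      (Or.inl ⟨hyp, by omega, hb⟩)
  have claim1 : ∀ t, a + 1 ≤ t → t ≤ r → J t ≤ J (a - 1) := by
    refine up_ind (fun t => J t ≤ J (a - 1)) (a + 1) r base ?_
    intro t hat htr ih
    obtain ⟨it1, it2⟩ := inc t (by omega) htr
    obtain ⟨ot1, ot2⟩ := ov_of_lt (ov t (by omega) htr) it1
    by_contra hb; push_neg at hb
    have hIt : I (a + 1) ≤ I (t + 1) :=
      step_mono_le I a r (fun s hs hs' => (inc s hs hs').1) (t + 1) (by omega)
        (a + 1) (by omega) (by omega)
    exact non (a - 1) (t + 1) (by omega) (by omega) (by omega) (by omega)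
      (Or.inl ⟨by omega, by omega, hb⟩)
  have hex : ∃ p, 1 ≤ p ∧ p ≤ a - 1 ∧ I p ≤ I (a + 1) := ⟨a - 1, by omega, le_refl _, hyp.le⟩
  obtain ⟨hp1, hpa, hpI⟩ := Nat.find_spec hex
  set p := Nat.find hex with hp
  have hJap : J (a - 1) ≤ J p :=
    step_anti_le J 1 a (fun s hs hs' => (dec s hs hs').2) (a - 1) (by omega) p hp1 hpa
  have hcont : ∀ t, a < t → t ≤ r → I p ≤ I t ∧ I t < J t ∧ J t ≤ J p := by
    intro t hat htr
    have h2 : I (a + 1) ≤ I t :=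
      step_mono_le I a r (fun s hs hs' => (inc s hs hs').1) t htr (a + 1) (by omega) (by omega)
    have h4 : I t < J t := by
      have o := ov (t - 1) (by omega) (by omega)
      rw [show t - 1 + 1 = t by omega] at o
      exact (ov_lt_right o).2
    exact ⟨hpI.trans h2, h4, (claim1 t (by omega) htr).trans hJap⟩
  refine ⟨p, hp1, by omega, hcont, ?_⟩
  intro hp2
  have hnot := Nat.find_min hex (show p - 1 < p by omega)
  have hIpa : I (a + 1) < I (p - 1) := by
    by_contra hb; push_neg at hb
    exact hnot ⟨by omega, by omega, hb⟩
  have hJp : J p < J (p - 1) := by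
    have := (dec (p - 1) (by omega) (by omega)).2
    rwa [show p - 1 + 1 = p by omega] at this
  have bnd_base : J (a + 1) < I (p - 1) := by
    by_contra hb; push_neg at hb
    exact non (p - 1) (a + 1) (by omega) (by omega) (by omega) (by omega)
      (Or.inr ⟨hIpa, hb, by omega⟩)
  have key : ∀ t, a + 1 ≤ t → t ≤ r → J t < I (p - 1) := by
    refine up_ind (fun t => J t < I (p - 1)) (a + 1) r bnd_base ?_
    intro t hat htr ih
    by_contra hb; push_neg at hb
    obtain ⟨it1, it2⟩ := inc t (by omega) htr
    obtain ⟨ot1, ot2⟩ := ov_of_lt (ov t (by omega) htr) it1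
    by_cases hc2 : J (t + 1) < J (p - 1)
    · exact non (p - 1) (t + 1) (by omega) (by omega) (by omega) (by omega)
        (Or.inr ⟨by omega, hb, hc2⟩)
    · push_neg at hc2
      have h1 := (hcont (t + 1) (by omega) (by omega)).2.2
      omega
  intro t hat htr; exact key t (by omega) htr

private lemma core_right' (r a : ℕ) (I J : ℕ → ℤ) (ha2 : 2 ≤ a) (har : a < r)
    (inc : ∀ s, 1 ≤ s → s + 1 ≤ a → I s < I (s + 1) ∧ J s < J (s + 1))
    (dec : ∀ s, a ≤ s → s + 1 ≤ r → I (s + 1) < I s ∧ J (s + 1) < J s)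
    (ov : ∀ s, 1 ≤ s → s + 1 ≤ r → Overlap (I s) (J s) (I (s + 1)) (J (s + 1)))
    (non : ∀ s t, 1 ≤ s → s < a → a < t → t ≤ r → ¬ Overlap (I s) (J s) (I t) (J t))
    (hyp : I (a + 1) < I (a - 1)) :
    ∃ p, a + 1 ≤ p ∧ p ≤ r ∧
      (∀ s, 1 ≤ s → s ≤ a - 1 → I p ≤ I s ∧ I s < J s ∧ J s ≤ J p) ∧
      (p + 1 ≤ r → ∀ s, 1 ≤ s → s ≤ a - 1 → J (p + 1) < I s) := by
  classical
  have ea : a - 1 + 1 = a := by omega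
  have hia : I (a - 1) < I a := by
    have := (inc (a - 1) (by omega) (by omega)).1; rwa [ea] at this
  have o1 := ov (a - 1) (by omega) (by omega)
  rw [ea] at o1
  obtain ⟨o11, o12⟩ := ov_of_lt o1 hia
  obtain ⟨d11, d12⟩ := dec a (le_refl a) (by omega)
  obtain ⟨o21, o22⟩ := ov_of_gt (ov a (by omega) (by omega)) d11
  have base : J (a - 1) ≤ J (a + 1) := by
    by_contra hb; push_neg at hb
    exact non (a - 1) (a + 1) (by omega) (by omega) (by omega) (by omega)
      (Or.inr ⟨hyp, by omega, hb⟩)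
  have claim1 : ∀ s, 1 ≤ s → s ≤ a - 1 → I (a + 1) ≤ I s ∧ J s ≤ J (a + 1) := by
    refine down_ind (fun s => I (a + 1) ≤ I s ∧ J s ≤ J (a + 1)) (a - 1) ⟨hyp.le, base⟩ ?_
    rintro s hs1 hsa ⟨ih1, ih2⟩
    obtain ⟨is1, is2⟩ := inc s hs1 (by omega)
    obtain ⟨os1, os2⟩ := ov_of_lt (ov s hs1 (by omega)) is1
    constructor
    · by_contra hb; push_neg at hb
      exact non s (a + 1) hs1 (by omega) (by omega) (by omega)
        (Or.inl ⟨hb, by omega, by omega⟩)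
    · omega
  obtain ⟨p, hpdef⟩ : ∃ p, p = Nat.findGreatest (fun q => a + 1 ≤ q ∧ q ≤ r ∧ J (a - 1) ≤ J q) r :=
    ⟨_, rfl⟩
  have hspec := Nat.findGreatest_spec (m := a + 1)
    (P := fun q => a + 1 ≤ q ∧ q ≤ r ∧ J (a - 1) ≤ J q)
    (show a + 1 ≤ r by omega) ⟨le_refl _, by omega, base⟩
  rw [← hpdef] at hspec
  obtain ⟨hp1, hpr, hpJ⟩ := hspec
  have hcont : ∀ s, 1 ≤ s → s ≤ a - 1 → I p ≤ I s ∧ I s < J s ∧ J s ≤ J p := by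
    intro s hs1 hsa
    have h1 : I p ≤ I (a + 1) :=
      step_anti_le I a r (fun u hu hu' => (dec u hu hu').1) p hpr (a + 1) (by omega) hp1
    have h3 : J s ≤ J (a - 1) :=
      step_mono_le J 1 a (fun u hu hu' => (inc u hu hu').2) (a - 1) (by omega) s hs1 hsa
    have h4 : I s < J s := (ov_lt_right (ov s hs1 (by omega))).1
    exact ⟨h1.trans (claim1 s hs1 hsa).1, h4, h3.trans hpJ⟩
  refine ⟨p, hp1, hpr, hcont, ?_⟩
  intro hpr1
  have hnot : ¬ (a + 1 ≤ p + 1 ∧ p + 1 ≤ r ∧ J (a - 1) ≤ J (p + 1)) := by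
    have h1 := Nat.findGreatest_is_greatest
      (P := fun q => a + 1 ≤ q ∧ q ≤ r ∧ J (a - 1) ≤ J q) (n := r) (k := p + 1)
      (by rw [← hpdef]; omega) hpr1
    exact h1
  have hJp1 : J (p + 1) < J (a - 1) := by
    by_contra hb; push_neg at hb
    exact hnot ⟨by omega, hpr1, hb⟩
  obtain ⟨dp1, dp2⟩ := dec p (by omega) hpr1
  have hIpa : I (p + 1) < I (a - 1) := by
    have : I p ≤ I (a + 1) :=
      step_anti_le I a r (fun u hu hu' => (dec u hu hu').1) p hpr (a + 1) (by omega) hp1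
    omega
  have bnd_base : J (p + 1) < I (a - 1) := by
    by_contra hb; push_neg at hb
    exact non (a - 1) (p + 1) (by omega) (by omega) (by omega) hpr1
      (Or.inr ⟨hIpa, hb, hJp1⟩)
  have key : ∀ s, 1 ≤ s → s ≤ a - 1 → J (p + 1) < I s := by
    refine down_ind (fun s => J (p + 1) < I s) (a - 1) bnd_base ?_
    intro s hs1 hsa ih
    by_contra hb; push_neg at hb
    obtain ⟨is1, is2⟩ := inc s hs1 (by omega)
    obtain ⟨os1, os2⟩ := ov_of_lt (ov s hs1 (by omega)) is1
    by_cases hc2 : I (p + 1) < I s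
    · exact non s (p + 1) hs1 (by omega) (by omega) hpr1
        (Or.inr ⟨hc2, hb, by omega⟩)
    · push_neg at hc2
      have h1 := (hcont s hs1 (by omega)).1
      omega
  exact key

private lemma core_left' (r a : ℕ) (I J : ℕ → ℤ) (ha2 : 2 ≤ a) (har : a < r)
    (dec : ∀ s, 1 ≤ s → s + 1 ≤ a → I (s + 1) < I s ∧ J (s + 1) < J s)
    (inc : ∀ s, a ≤ s → s + 1 ≤ r → I s < I (s + 1) ∧ J s < J (s + 1))
    (ov : ∀ s, 1 ≤ s → s + 1 ≤ r → Overlap (I s) (J s) (I (s + 1)) (J (s + 1)))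
    (non : ∀ s t, 1 ≤ s → s < a → a < t → t ≤ r → ¬ Overlap (I s) (J s) (I t) (J t))
    (hyp : I (a + 1) < I (a - 1)) :
    ∃ p, a + 1 ≤ p ∧ p ≤ r ∧
      (∀ s, 1 ≤ s → s ≤ a - 1 → I p ≤ I s ∧ I s < J s ∧ J s ≤ J p) ∧
      (p + 1 ≤ r → ∀ s, 1 ≤ s → s ≤ a - 1 → J s < I (p + 1)) := by
  classical
  have ea : a - 1 + 1 = a := by omega
  have hda : I a < I (a - 1) := by
    have := (dec (a - 1) (by omega) (by omega)).1; rwa [ea] at this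
  have o1 := ov (a - 1) (by omega) (by omega)
  rw [ea] at o1
  obtain ⟨o11, o12⟩ := ov_of_gt o1 hda
  obtain ⟨i11, i12⟩ := inc a (le_refl a) (by omega)
  obtain ⟨o21, o22⟩ := ov_of_lt (ov a (by omega) (by omega)) i11
  have base : J (a - 1) ≤ J (a + 1) := by
    by_contra hb; push_neg at hb
    exact non (a - 1) (a + 1) (by omega) (by omega) (by omega) (by omega)
      (Or.inr ⟨hyp, by omega, hb⟩)
  have claim1 : ∀ s, 1 ≤ s → s ≤ a - 1 → J s ≤ J (a + 1) := by
    refine down_ind (fun s => J s ≤ J (a + 1)) (a - 1) base ?_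
    intro s hs1 hsa ih
    obtain ⟨ds1, ds2⟩ := dec s hs1 (by omega)
    obtain ⟨os1, os2⟩ := ov_of_gt (ov s hs1 (by omega)) ds1
    by_contra hb; push_neg at hb
    have hIs : I (a - 1) ≤ I s :=
      step_anti_le I 1 a (fun u hu hu' => (dec u hu hu').1) (a - 1) (by omega) s hs1 (by omega)
    exact non s (a + 1) hs1 (by omega) (by omega) (by omega)
      (Or.inr ⟨by omega, by omega, hb⟩)
  obtain ⟨p, hpdef⟩ : ∃ p, p = Nat.findGreatest (fun q => a + 1 ≤ q ∧ q ≤ r ∧ I q ≤ I (a - 1)) r :=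
    ⟨_, rfl⟩
  have hspec := Nat.findGreatest_spec (m := a + 1)
    (P := fun q => a + 1 ≤ q ∧ q ≤ r ∧ I q ≤ I (a - 1))
    (show a + 1 ≤ r by omega) ⟨le_refl _, by omega, hyp.le⟩
  rw [← hpdef] at hspec
  obtain ⟨hp1, hpr, hpI⟩ := hspec
  have hJap : J (a + 1) ≤ J p :=
    step_mono_le J a r (fun u hu hu' => (inc u hu hu').2) p hpr (a + 1) (by omega) hp1
  have hcont : ∀ s, 1 ≤ s → s ≤ a - 1 → I p ≤ I s ∧ I s < J s ∧ J s ≤ J p := by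
    intro s hs1 hsa
    have h2 : I (a - 1) ≤ I s :=
      step_anti_le I 1 a (fun u hu hu' => (dec u hu hu').1) (a - 1) (by omega) s hs1 hsa
    have h4 : I s < J s := (ov_lt_right (ov s hs1 (by omega))).1
    exact ⟨hpI.trans h2, h4, (claim1 s hs1 hsa).trans hJap⟩
  refine ⟨p, hp1, hpr, hcont, ?_⟩
  intro hpr1
  have hnot : ¬ (a + 1 ≤ p + 1 ∧ p + 1 ≤ r ∧ I (p + 1) ≤ I (a - 1)) := by
    have h1 := Nat.findGreatest_is_greatest
      (P := fun q => a + 1 ≤ q ∧ q ≤ r ∧ I q ≤ I (a - 1)) (n := r) (k := p + 1)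
      (by rw [← hpdef]; omega) hpr1
    exact h1
  have hIpa : I (a - 1) < I (p + 1) := by
    by_contra hb; push_neg at hb
    exact hnot ⟨by omega, hpr1, hb⟩
  obtain ⟨ip1, ip2⟩ := inc p (by omega) hpr1
  have bnd_base : J (a - 1) < I (p + 1) := by
    by_contra hb; push_neg at hb
    exact non (a - 1) (p + 1) (by omega) (by omega) (by omega) hpr1
      (Or.inl ⟨hIpa, hb, by omega⟩)
  have key : ∀ s, 1 ≤ s → s ≤ a - 1 → J s < I (p + 1) := by
    refine down_ind (fun s => J s < I (p + 1)) (a - 1) bnd_base ?_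
    intro s hs1 hsa ih
    by_contra hb; push_neg at hb
    obtain ⟨ds1, ds2⟩ := dec s hs1 (by omega)
    obtain ⟨os1, os2⟩ := ov_of_gt (ov s hs1 (by omega)) ds1
    by_cases hc2 : J s < J (p + 1)
    · exact non s (p + 1) hs1 (by omega) (by omega) hpr1
        (Or.inl ⟨by omega, hb, hc2⟩)
    · push_neg at hc2
      have h1 := claim1 s hs1 (by omega)
      omega
  exact key

/-- Proposition (structure1 (iii)): for a connected alternating snake with
`r(𝐬) = (1, r_1, r_2)` and `ε ∈ {0,1}`, if `i_{r_1−1+2ε} < i_{r_1+1−2ε}` then there is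
`r_ε + ε ≤ p_1 < r_{1+ε} + ε` with `i_{p_1} ≤ i_s < j_s ≤ j_{p_1}` for all
`r_{1−ε} − ε < s ≤ r_{2−ε} − ε`, and whenever `p_1 − 1 + 2ε ∈ {1,…,r_2}`:
`𝐬(0,r_1) ∈ S_→` implies `j_{p_1−1+2ε} < i_{r_{2−2ε}}`, and `𝐬(0,r_1) ∈ S_←` implies
`j_{r_{2−2ε}} < i_{p_1−1+2ε}`. -/
theorem stmt_9 (n r : ℕ) (hn : 1 ≤ n) (rr : ℕ → ℕ) (ii jj : ℕ → ℤ)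
    (h : IsAltSnake n r 2 rr ii jj) (hc : SegConnected n ii jj 0 r)
    (ε : ℕ) (hε : ε ≤ 1)
    (hlt : ii (rr 1 - 1 + 2 * ε) < ii (rr 1 + 1 - 2 * ε)) :
    ∃ p1, rr ε + ε ≤ p1 ∧ p1 < rr (1 + ε) + ε ∧
      (∀ s, rr (1 - ε) - ε < s → s ≤ rr (2 - ε) - ε →
        ii p1 ≤ ii s ∧ ii s < jj s ∧ jj s ≤ jj p1) ∧
      (1 ≤ p1 - 1 + 2 * ε → p1 - 1 + 2 * ε ≤ rr 2 →
        (SRight ii jj 0 (rr 1) → jj (p1 - 1 + 2 * ε) < ii (rr (2 - 2 * ε))) ∧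
        (SLeft ii jj 0 (rr 1) → jj (rr (2 - 2 * ε)) < ii (p1 - 1 + 2 * ε))) := by
  obtain ⟨hr, hk, mem, distinct, hrr0, hrrk, rrmono, mono, alt, nonov⟩ := h
  have hr2 : rr 2 = r := hrrk
  have h01 : rr 0 < rr 1 := rrmono 0 (by norm_num)
  have h12 : rr 1 < rr 2 := rrmono 1 (by norm_num)
  have ha2 : 2 ≤ rr 1 := by omega
  have har : rr 1 < r := by omega
  have ov : ∀ s, 1 ≤ s → s + 1 ≤ r → Overlap (ii s) (jj s) (ii (s + 1)) (jj (s + 1)) :=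
    fun s hs hs' => (hc s (by omega) hs').1
  have non : ∀ s t, 1 ≤ s → s < rr 1 → rr 1 < t → t ≤ r →
      ¬ Overlap (ii s) (jj s) (ii t) (jj t) :=
    fun s t h1 h2 h3 h4 => nonov 1 s t (le_refl 1) (by norm_num) h1 h2 h3 h4
  have hm1 : SRight ii jj 0 (rr 1) ∨ SLeft ii jj 0 (rr 1) := by
    have := mono 1 (by norm_num) (by norm_num)
    simpa [hrr0] using this
  have hm2 : SRight ii jj (rr 1 - 1) (rr 2) ∨ SLeft ii jj (rr 1 - 1) (rr 2) := by
    have := mono 2 (by norm_num) (by norm_num)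
    simpa using this
  have halt : SRight ii jj 0 (rr 1) ↔ SLeft ii jj (rr 1 - 1) (rr 2) := by
    have := alt 1 (by norm_num) (by norm_num)
    simpa [hrr0] using this
  have hnotboth : ¬ (SRight ii jj 0 (rr 1) ∧ SLeft ii jj 0 (rr 1)) := by
    rintro ⟨hR, hL⟩
    have h1 := (hR 1 (by omega) (by omega)).1
    have h2 := (hL 1 (by omega) (by omega)).1
    omega
  obtain rfl | rfl : ε = 0 ∨ ε = 1 := by omega
  · -- case ε = 0
    norm_num at hlt ⊢
    rcases hm1 with hRight | hLeft
    · have hL2 : SLeft ii jj (rr 1 - 1) (rr 2) := halt.mp hRight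
      obtain ⟨p, hp1, hpa, hcont, hbnd⟩ := core_right r (rr 1) ii jj ha2 har
        (fun s hs hs' => hRight s (by omega) hs')
        (fun s hs hs' => hL2 s (by omega) (by omega))
        ov non hlt
      refine ⟨p, by omega, by omega, ?_, ?_⟩
      · intro s hs1 hs2
        exact hcont s hs1 (by omega)
      · intro hb1 _
        constructor
        · intro _
          rw [hr2]
          exact hbnd (by omega) r (by omega) (le_refl r)
        · intro hLft
          exact absurd ⟨hRight, hLft⟩ hnotboth
    · have hnR : ¬ SRight ii jj 0 (rr 1) := fun hR => hnotboth ⟨hR, hLeft⟩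
      have hR2 : SRight ii jj (rr 1 - 1) (rr 2) := by
        rcases hm2 with h' | h'
        · exact h'
        · exact absurd (halt.mpr h') hnR
      obtain ⟨p, hp1, hpa, hcont, hbnd⟩ := core_left r (rr 1) ii jj ha2 har
        (fun s hs hs' => hLeft s (by omega) hs')
        (fun s hs hs' => hR2 s (by omega) (by omega))
        ov non hlt
      refine ⟨p, by omega, by omega, ?_, ?_⟩
      · intro s hs1 hs2
        exact hcont s hs1 (by omega)
      · intro hb1 _
        constructor
        · intro hRt
          exact absurd ⟨hRt, hLeft⟩ hnotboth
        · intro _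
          rw [hr2]
          exact hbnd (by omega) r (by omega) (le_refl r)
  · -- case ε = 1
    norm_num at hlt ⊢
    rw [show rr 1 - 1 + 2 = rr 1 + 1 by omega, show rr 1 + 1 - 2 = rr 1 - 1 by omega] at hlt
    rcases hm1 with hRight | hLeft
    · have hL2 : SLeft ii jj (rr 1 - 1) (rr 2) := halt.mp hRight
      obtain ⟨p, hp1, hpr, hcont, hbnd⟩ := core_right' r (rr 1) ii jj ha2 har
        (fun s hs hs' => hRight s (by omega) hs')
        (fun s hs hs' => hL2 s (by omega) (by omega))
        ov non hlt
      refine ⟨p, by omega, by omega, ?_, ?_⟩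
      · intro s hs1 hs2
        exact hcont s (by omega) hs2
      · intro hb2
        rw [show p - 1 + 2 = p + 1 by omega] at hb2 ⊢
        constructor
        · intro _
          rw [hrr0]
          exact hbnd (by omega) 1 (le_refl 1) (by omega)
        · intro hLft
          exact absurd ⟨hRight, hLft⟩ hnotboth
    · have hnR : ¬ SRight ii jj 0 (rr 1) := fun hR => hnotboth ⟨hR, hLeft⟩
      have hR2 : SRight ii jj (rr 1 - 1) (rr 2) := by
        rcases hm2 with h' | h'
        · exact h'
        · exact absurd (halt.mpr h') hnR
      obtain ⟨p, hp1, hpr, hcont, hbnd⟩ := core_left' r (rr 1) ii jj ha2 har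
        (fun s hs hs' => hLeft s (by omega) hs')
        (fun s hs hs' => hR2 s (by omega) (by omega))
        ov non hlt
      refine ⟨p, by omega, by omega, ?_, ?_⟩
      · intro s hs1 hs2
        exact hcont s (by omega) hs2
      · intro hb2
        rw [show p - 1 + 2 = p + 1 by omega] at hb2 ⊢
        constructor
        · intro hRt
          exact absurd ⟨hRt, hLeft⟩ hnotboth
        · intro _
          rw [hrr0]
          exact hbnd (by omega) 1 (le_refl 1) (by omega)


end AltSnakePaper
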